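/- Let f : [a,b] → ℝ be continuous and integrable on [a,b] with 0 ≤ a < b, and let p > 0 be fixed. If f is (α,m)-convex for some fixed (α,m) ∈ (0,1]², then ∫_a^b (x-a)^p (b-x)^p f(x) dx ≤ (b-a)^{2p+1} [β(p+α+1, p+1) f(a) + m(β(p+1, p+1) − β(p+α+1, p+1)) f(b/m)]. -/

import Mathlib

open Real Set MeasureTheory intervalIntegral

noncomputable def beta (x y : ℝ) : ℝ := ∫ t in (0:ℝ)..1, t ^ (x-1) * (1-t) ^ (y-1)

def AMConvexOn (s : Set ℝ) (α m : ℝ) (g : ℝ → ℝ) : Prop :=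
  ∀ x ∈ s, ∀ y ∈ s, ∀ t ∈ Set.Icc (0:ℝ) 1, g (t*x + m*(1-t)*y) ≤ t ^ α * g x + m*(1 - t ^ α) * g y

lemma contOn_rpow (q : ℝ) (hq : 0 ≤ q) : ContinuousOn (fun t : ℝ => t ^ q) (Set.Icc 0 1) :=
  fun t _ => (Real.continuousAt_rpow_const t q (Or.inr hq)).continuousWithinAt

lemma contOn_piece (q r : ℝ) (hq : 0 ≤ q) (hr : 0 ≤ r) :
    ContinuousOn (fun t : ℝ => t ^ q * (1 - t) ^ r) (Set.Icc 0 1) := by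
  apply (contOn_rpow q hq).mul
  have : ContinuousOn (fun t : ℝ => (1 - t)) (Set.Icc 0 1) := by fun_prop
  exact ((contOn_rpow r hr).comp this (fun t ht => ⟨by linarith [ht.2], by linarith [ht.1]⟩))

lemma intInt_piece (q r : ℝ) (hq : 0 ≤ q) (hr : 0 ≤ r) :
    IntervalIntegrable (fun t : ℝ => t ^ q * (1 - t) ^ r) volume 0 1 := by
  have h := contOn_piece q r hq hr
  apply ContinuousOn.intervalIntegrable
  rwa [Set.uIcc_of_le (by norm_num : (0:ℝ) ≤ 1)]

theorem stmt4 (a b p : ℝ) (f : ℝ → ℝ)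
    (ha : 0 ≤ a) (hab : a < b) (hp : 0 < p)
    (hcont : ContinuousOn f (Set.Icc a b))
    (hint : IntervalIntegrable f volume a b)
    (α m : ℝ) (hα : α ∈ Set.Ioc (0:ℝ) 1) (hm : m ∈ Set.Ioc (0:ℝ) 1)
    (hf : AMConvexOn (Set.Icc 0 (b/m)) α m f) :
    ∫ x in a..b, (x-a)^p * (b-x)^p * f x
      ≤ (b-a)^(2*p+1) * (beta (p+α+1) (p+1) * f a
          + m * (beta (p+1) (p+1) - beta (p+α+1) (p+1)) * f (b/m)) := by
  obtain ⟨hα0, hα1⟩ := hα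
  obtain ⟨hm0, hm1⟩ := hm
  have hb : 0 < b := ha.trans_lt hab
  have hc : 0 < b - a := sub_pos.2 hab
  have hbm : b ≤ b / m := le_div_self hb.le hm0 hm1
  have hIcc01 : Set.uIcc (0:ℝ) 1 = Set.Icc 0 1 := Set.uIcc_of_le (by norm_num)
  -- affine map
  have hmap : ∀ t ∈ Set.Icc (0:ℝ) 1, t*a + (1-t)*b ∈ Set.Icc a b := by
    intro t ht
    constructor
    · nlinarith [ht.1, ht.2]
    · nlinarith [ht.1, ht.2]
  -- step 1 : substitution
  have hsub : ∫ t in (0:ℝ)..1, ((b-a)*(1-t))^p * ((b-a)*t)^p * f (t*a + (1-t)*b)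
      = (b-a)⁻¹ * ∫ x in a..b, (x-a)^p * (b-x)^p * f x := by
    have h1 : (fun t : ℝ => ((b-a)*(1-t))^p * ((b-a)*t)^p * f (t*a + (1-t)*b))
        = fun t : ℝ => ((-(b-a))*t + b - a)^p * (b - ((-(b-a))*t + b))^p * f ((-(b-a))*t + b) := by
      funext t
      have e1 : (-(b-a))*t + b - a = (b-a)*(1-t) := by ring
      have e2 : b - ((-(b-a))*t + b) = (b-a)*t := by ring
      have e3 : (-(b-a))*t + b = t*a + (1-t)*b := by ring
      rw [e1, e2, e3]
    rw [h1]
    have := intervalIntegral.integral_comp_mul_add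
      (a := (0:ℝ)) (b := 1) (f := fun x => (x-a)^p * (b-x)^p * f x)
      (c := -(b-a)) (neg_ne_zero.2 hc.ne') b
    simp only [mul_zero, zero_add, mul_one] at this
    have h2 : (fun t : ℝ => ((-(b-a))*t + b - a)^p * (b - ((-(b-a))*t + b))^p * f ((-(b-a))*t + b))
        = fun t : ℝ => ((-(b-a))*t + b - a)^p * (b - ((-(b-a))*t + b))^p * f ((-(b-a))*t + b) := rfl
    rw [this, show -(b-a) + b = a by ring, intervalIntegral.integral_symm a b,
      smul_eq_mul, inv_neg]
    ring
  -- step 2: pull out constants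
  have hpull : ∫ t in (0:ℝ)..1, ((b-a)*(1-t))^p * ((b-a)*t)^p * f (t*a + (1-t)*b)
      = (b-a)^(2*p) * ∫ t in (0:ℝ)..1, t^p * (1-t)^p * f (t*a + (1-t)*b) := by
    rw [← intervalIntegral.integral_const_mul]
    apply intervalIntegral.integral_congr
    intro t ht
    rw [hIcc01] at ht
    have ht0 : (0:ℝ) ≤ t := ht.1
    have ht1 : (0:ℝ) ≤ 1 - t := by linarith [ht.2]
    simp only []
    rw [Real.mul_rpow hc.le ht1, Real.mul_rpow hc.le ht0,
      show (b-a)^(2*p) = (b-a)^p * (b-a)^p by rw [two_mul, Real.rpow_add hc]]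
    ring
  -- pointwise bound
  have hax : a ∈ Set.Icc 0 (b/m) := ⟨ha, le_trans hab.le hbm⟩
  have hbx : b/m ∈ Set.Icc 0 (b/m) := ⟨by positivity, le_refl _⟩
  have hptwise : ∀ t ∈ Set.Icc (0:ℝ) 1,
      t^p * (1-t)^p * f (t*a + (1-t)*b)
        ≤ t^p * (1-t)^p * (t^α * f a + m*(1 - t^α) * f (b/m)) := by
    intro t ht
    have key := hf a hax (b/m) hbx t ht
    have harg : t*a + m*(1-t)*(b/m) = t*a + (1-t)*b := by
      field_simp
    rw [harg] at key
    have hnn : 0 ≤ t^p * (1-t)^p := by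
      have h0 : (0:ℝ) ≤ t := ht.1
      have h1 : (0:ℝ) ≤ 1 - t := by linarith [ht.2]
      positivity
    exact mul_le_mul_of_nonneg_left key hnn
  -- integrability of both sides
  have hg1 : IntervalIntegrable (fun t : ℝ => t^p * (1-t)^p * f (t*a + (1-t)*b)) volume 0 1 := by
    apply ContinuousOn.intervalIntegrable
    rw [hIcc01]
    apply (contOn_piece p p hp.le hp.le).mul
    apply hcont.comp (by fun_prop) hmap
  have hg2 : IntervalIntegrable
      (fun t : ℝ => t^p * (1-t)^p * (t^α * f a + m*(1 - t^α) * f (b/m))) volume 0 1 := by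
    apply ContinuousOn.intervalIntegrable
    rw [hIcc01]
    apply (contOn_piece p p hp.le hp.le).mul
    apply ContinuousOn.add
    · exact (contOn_rpow α hα0.le).mul continuousOn_const
    · apply ContinuousOn.mul _ continuousOn_const
      exact continuousOn_const.mul (continuousOn_const.sub (contOn_rpow α hα0.le))
  have hmono : ∫ t in (0:ℝ)..1, t^p * (1-t)^p * f (t*a + (1-t)*b)
      ≤ ∫ t in (0:ℝ)..1, t^p * (1-t)^p * (t^α * f a + m*(1 - t^α) * f (b/m)) := by
    apply intervalIntegral.integral_mono_on (by norm_num) hg1 hg2 hptwise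
  -- compute the RHS integral
  have hbeta1 : beta (p+α+1) (p+1) = ∫ t in (0:ℝ)..1, t^(p+α) * (1-t)^p := by
    simp only [beta, add_sub_cancel_right]
  have hbeta0 : beta (p+1) (p+1) = ∫ t in (0:ℝ)..1, t^p * (1-t)^p := by
    simp only [beta, add_sub_cancel_right]
  have hcomp : ∫ t in (0:ℝ)..1, t^p * (1-t)^p * (t^α * f a + m*(1 - t^α) * f (b/m))
      = beta (p+α+1) (p+1) * f a
          + m * (beta (p+1) (p+1) - beta (p+α+1) (p+1)) * f (b/m) := by
    have hcongr : ∫ t in (0:ℝ)..1, t^p * (1-t)^p * (t^α * f a + m*(1 - t^α) * f (b/m))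
        = ∫ t in (0:ℝ)..1, (f a * (t^(p+α) * (1-t)^p)
            + (m * f (b/m)) * (t^p * (1-t)^p) - (m * f (b/m)) * (t^(p+α) * (1-t)^p)) := by
      apply intervalIntegral.integral_congr
      intro t ht
      rw [hIcc01] at ht
      simp only []
      rw [Real.rpow_add_of_nonneg ht.1 hp.le hα0.le]
      ring
    rw [hcongr]
    have i1 := intInt_piece (p+α) p (by positivity) hp.le
    have i0 := intInt_piece p p hp.le hp.le
    rw [intervalIntegral.integral_sub ((i1.const_mul (f a)).add (i0.const_mul (m * f (b/m))))
        (i1.const_mul (m * f (b/m))),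
      intervalIntegral.integral_add (i1.const_mul (f a)) (i0.const_mul (m * f (b/m))),
      intervalIntegral.integral_const_mul, intervalIntegral.integral_const_mul,
      intervalIntegral.integral_const_mul, hbeta1, hbeta0]
    ring
  -- put it together
  have hLHS : ∫ x in a..b, (x-a)^p * (b-x)^p * f x
      = (b-a) * ((b-a)^(2*p) * ∫ t in (0:ℝ)..1, t^p * (1-t)^p * f (t*a + (1-t)*b)) := by
    rw [← hpull, hsub]
    field_simp
  rw [hLHS, show (b-a)^(2*p+1) = (b-a) * (b-a)^(2*p) by
    rw [Real.rpow_add hc, Real.rpow_one]; ring]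
  rw [← hcomp]
  have hpos : 0 < (b-a) * (b-a)^(2*p) := by positivity
  calc (b-a) * ((b-a)^(2*p) * ∫ t in (0:ℝ)..1, t^p * (1-t)^p * f (t*a + (1-t)*b))
      = ((b-a) * (b-a)^(2*p)) * ∫ t in (0:ℝ)..1, t^p * (1-t)^p * f (t*a + (1-t)*b) := by ring
    _ ≤ ((b-a) * (b-a)^(2*p)) * ∫ t in (0:ℝ)..1, t^p * (1-t)^p * (t^α * f a + m*(1 - t^α) * f (b/m)) := by
        exact mul_le_mul_of_nonneg_left hmono hpos.le
    _ = (b-a) * (b-a)^(2*p) * ∫ t in (0:ℝ)..1, t^p * (1-t)^p * (t^α * f a + m*(1 - t^α) * f (b/m)) := by ring
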